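/- Let f̃(z) = 3.3957·(1−z)·exp(∫ᶻ¹ F̃(w) dw) where F̃(z) = −(z⁶ + 7z⁴ + 12z³ − 9z² − 4z + 1)/((z+1)(z²+1)(z²+2z−1)(z²−2z−1)). Then f̃ is strictly decreasing on [z₀, 1], where z₀ = √(−2 + √5). -/

import Mathlib

noncomputable def Ftilde (z : ℝ) : ℝ :=
  -(z ^ 6 + 7 * z ^ 4 + 12 * z ^ 3 - 9 * z ^ 2 - 4 * z + 1) /
    ((z + 1) * (z ^ 2 + 1) * (z ^ 2 + 2 * z - 1) * (z ^ 2 - 2 * z - 1))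

noncomputable def ftilde (z : ℝ) : ℝ :=
  3.3957 * (1 - z) * Real.exp (∫ w in z..1, Ftilde w)

namespace Stmt6Aux

noncomputable def den (z : ℝ) : ℝ :=
  (z + 1) * (z ^ 2 + 1) * (z ^ 2 + 2 * z - 1) * (z ^ 2 - 2 * z - 1)

lemma s5_sq : Real.sqrt 5 ^ 2 = 5 := Real.sq_sqrt (by norm_num)

lemma s5_lt : Real.sqrt 5 < 9 / 4 := by
  nlinarith [s5_sq, Real.sqrt_nonneg 5]

lemma s5_gt : 2 < Real.sqrt 5 := by
  nlinarith [s5_sq, Real.sqrt_nonneg 5]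

lemma z0_sq : Real.sqrt (-2 + Real.sqrt 5) ^ 2 = -2 + Real.sqrt 5 :=
  Real.sq_sqrt (by nlinarith [s5_gt])

lemma z0_pos : 0 < Real.sqrt (-2 + Real.sqrt 5) :=
  Real.sqrt_pos.mpr (by nlinarith [s5_gt])

lemma z0_lt_one : Real.sqrt (-2 + Real.sqrt 5) < 1 := by
  nlinarith [z0_sq, z0_pos, s5_lt]

lemma den_neg {z : ℝ} (hz : z ∈ Set.Icc (Real.sqrt (-2 + Real.sqrt 5)) 1) :
    den z < 0 := by
  obtain ⟨h1, h2⟩ := hz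
  have hz0 : 0 < z := lt_of_lt_of_le z0_pos h1
  have hzsq : -2 + Real.sqrt 5 ≤ z ^ 2 := by
    calc -2 + Real.sqrt 5 = Real.sqrt (-2 + Real.sqrt 5) ^ 2 := z0_sq.symm
    _ ≤ z ^ 2 := by nlinarith [z0_pos]
  have hA : 0 < z + 1 := by linarith
  have hB : 0 < z ^ 2 + 1 := by positivity
  have hC : 0 < z ^ 2 + 2 * z - 1 := by nlinarith [s5_sq, s5_gt]
  have hE : z ^ 2 - 2 * z - 1 < 0 := by nlinarith
  have := mul_pos (mul_pos hA hB) hC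
  exact mul_neg_of_pos_of_neg this hE

lemma Ftilde_eq (z : ℝ) :
    Ftilde z = -(z ^ 6 + 7 * z ^ 4 + 12 * z ^ 3 - 9 * z ^ 2 - 4 * z + 1) / den z := rfl

lemma contAt {z : ℝ} (hz : den z ≠ 0) : ContinuousAt Ftilde z := by
  apply ContinuousAt.div
  · fun_prop
  · fun_prop
  · exact hz

lemma den_ne {z : ℝ} (hz : z ∈ Set.Icc (Real.sqrt (-2 + Real.sqrt 5)) 1) : den z ≠ 0 :=
  ne_of_lt (den_neg hz)

/-- The open set where the denominator is nonzero. -/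
lemma isOpen_U : IsOpen {z : ℝ | den z ≠ 0} := by
  have : Continuous den := by unfold den; fun_prop
  exact isOpen_ne_fun this continuous_const

lemma contOn_U : ContinuousOn Ftilde {z : ℝ | den z ≠ 0} := fun _ hz =>
  (contAt hz).continuousWithinAt

lemma hasDeriv_integral {a : ℝ} (ha : a ∈ Set.Icc (Real.sqrt (-2 + Real.sqrt 5)) 1) :
    HasDerivAt (fun u => ∫ w in u..1, Ftilde w) (-Ftilde a) a := by
  apply intervalIntegral.integral_hasDerivAt_left
  · apply ContinuousOn.intervalIntegrable
    intro x hx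
    apply (contAt (den_ne ?_)).continuousWithinAt
    rw [Set.uIcc_of_le ha.2] at hx
    exact ⟨le_trans ha.1 hx.1, hx.2⟩
  · exact contOn_U.stronglyMeasurableAtFilter isOpen_U _ (den_ne ha)
  · exact contAt (den_ne ha)

lemma hasDeriv_ftilde {a : ℝ} (ha : a ∈ Set.Icc (Real.sqrt (-2 + Real.sqrt 5)) 1) :
    HasDerivAt ftilde
      (3.3957 * Real.exp (∫ w in a..1, Ftilde w) * (-1 - (1 - a) * Ftilde a)) a := by
  have hI := hasDeriv_integral ha
  have hE : HasDerivAt (fun z => Real.exp (∫ w in z..1, Ftilde w))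
      (Real.exp (∫ w in a..1, Ftilde w) * (-Ftilde a)) a := hI.exp
  have hlin : HasDerivAt (fun z : ℝ => 3.3957 * (1 - z)) (-3.3957) a := by
    have := ((hasDerivAt_id a).const_sub 1).const_mul (3.3957 : ℝ)
    simpa using this
  have : HasDerivAt ftilde _ a :=
    hlin.mul hE
  convert this using 1
  ring

lemma key_neg {a : ℝ} (h1 : Real.sqrt (-2 + Real.sqrt 5) < a) (h2 : a < 1) :
    -1 - (1 - a) * Ftilde a < 0 := by
  have ha : a ∈ Set.Icc (Real.sqrt (-2 + Real.sqrt 5)) 1 := ⟨le_of_lt h1, le_of_lt h2⟩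
  have hD : den a < 0 := den_neg ha
  have hDne : den a ≠ 0 := ne_of_lt hD
  have hz0 : 0 < a := lt_of_lt_of_le z0_pos ha.1
  have hzsq : -2 + Real.sqrt 5 < a ^ 2 := by
    calc -2 + Real.sqrt 5 = Real.sqrt (-2 + Real.sqrt 5) ^ 2 := z0_sq.symm
    _ < a ^ 2 := by nlinarith [z0_pos]
  -- P(a) = den a - (1-a)*N a = 2a(a²-3)(a⁴+4a²-1) < 0
  have hP : den a - (1 - a) * (a ^ 6 + 7 * a ^ 4 + 12 * a ^ 3 - 9 * a ^ 2 - 4 * a + 1)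
      = 2 * a * (a ^ 2 - 3) * (a ^ 4 + 4 * a ^ 2 - 1) := by unfold den; ring
  have hfac : 0 < a ^ 4 + 4 * a ^ 2 - 1 := by nlinarith [s5_sq, s5_gt]
  have hPneg : den a - (1 - a) * (a ^ 6 + 7 * a ^ 4 + 12 * a ^ 3 - 9 * a ^ 2 - 4 * a + 1) < 0 := by
    rw [hP]
    have h3 : a ^ 2 - 3 < 0 := by nlinarith
    nlinarith [mul_pos hz0 hfac]
  -- now translate to the claim
  have hX : (-1 - (1 - a) * Ftilde a) * den a
      = -(den a - (1 - a) * (a ^ 6 + 7 * a ^ 4 + 12 * a ^ 3 - 9 * a ^ 2 - 4 * a + 1)) := by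
    rw [Ftilde_eq]
    field_simp
    ring
  have hXD : 0 < (-1 - (1 - a) * Ftilde a) * den a := by rw [hX]; linarith
  by_contra hcon
  push_neg at hcon
  have := mul_nonpos_of_nonneg_of_nonpos hcon (le_of_lt hD)
  linarith

end Stmt6Aux

theorem stmt_6 : StrictAntiOn ftilde (Set.Icc (Real.sqrt (-2 + Real.sqrt 5)) 1) := by
  apply strictAntiOn_of_deriv_neg (convex_Icc _ _)
  · intro x hx
    exact (Stmt6Aux.hasDeriv_ftilde hx).continuousAt.continuousWithinAt
  · intro x hx
    rw [interior_Icc] at hx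
    have hmem : x ∈ Set.Icc (Real.sqrt (-2 + Real.sqrt 5)) 1 := ⟨le_of_lt hx.1, le_of_lt hx.2⟩
    rw [(Stmt6Aux.hasDeriv_ftilde hmem).deriv]
    have hkey := Stmt6Aux.key_neg hx.1 hx.2
    have hEpos : 0 < Real.exp (∫ w in x..1, Ftilde w) := Real.exp_pos _
    have h33 : (0:ℝ) < 3.3957 := by norm_num
    exact mul_neg_of_pos_of_neg (mul_pos h33 hEpos) hkey
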